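/- Let q ∈ (0,∞), let (X,ρ,μ) be a space of homogeneous type satisfying the weak reverse doubling (WRD) condition, and let Ω ⊆ X be a measurable set satisfying the weak measure density (WMD) condition. Then there exists a positive constant C such that for every x ∈ Ω, liminf_{s→0⁺} s·∫_{Ω∖B(x,s^{−1/q})} 1/(U(x,y)·ρ(x,y)^{sq}) dμ(y) ≥ C. -/

import Mathlib

noncomputable section

open MeasureTheory Filter Set
open scoped ENNReal NNReal Topology

namespace Paper

variable {X : Type*} [MeasurableSpace X]

/-- The ball with center `x` and radius `r` for the quasi-metric `ρ`. -/
def ball (ρ : X → X → ℝ) (x : X) (r : ℝ) : Set X := {y | ρ x y < r}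

/-- `(X, ρ, μ)` is a quasi-metric measure space with quasi-triangle constant `K₀`:
`ρ` is a quasi-metric with constant `K₀` and all `ρ`-balls are `μ`-measurable. -/
structure IsQuasiMetricMeasure (ρ : X → X → ℝ) (μ : Measure X) (K₀ : ℝ) : Prop where
  nonneg : ∀ x y, 0 ≤ ρ x y
  eq_zero_iff : ∀ x y, ρ x y = 0 ↔ x = y
  symm : ∀ x y, ρ x y = ρ y x
  one_le : 1 ≤ K₀
  triangle : ∀ x y z, ρ x z ≤ K₀ * (ρ x y + ρ y z)
  measurableSet_ball : ∀ x r, MeasurableSet (ball ρ x r)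

/-- The doubling condition for `μ` with doubling constant `L ∈ [1, ∞)`:
`0 < μ(B(x,2r)) ≤ L · μ(B(x,r)) < ∞` for all `x` and `r > 0`. -/
def IsDoubling (ρ : X → X → ℝ) (μ : Measure X) (L : ℝ≥0∞) : Prop :=
  1 ≤ L ∧ L < ∞ ∧ ∀ (x : X) (r : ℝ), 0 < r →
    0 < μ (ball ρ x r) ∧ μ (ball ρ x (2 * r)) ≤ L * μ (ball ρ x r) ∧ μ (ball ρ x r) < ∞

/-- `U(x,y) := min{μ(B(x,ρ(x,y))), μ(B(y,ρ(x,y)))}`. -/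
def U (ρ : X → X → ℝ) (μ : Measure X) (x y : X) : ℝ≥0∞ :=
  min (μ (ball ρ x (ρ x y))) (μ (ball ρ y (ρ x y)))

/-- The weak reverse doubling (WRD) condition. -/
def WRD (ρ : X → X → ℝ) (μ : Measure X) : Prop :=
  ∃ (x₀ : X) (lam C : ℝ), 1 < lam ∧ 1 < C ∧
    ENNReal.ofReal C ≤
      liminf (fun r : ℝ => μ (ball ρ x₀ (lam * r)) / μ (ball ρ x₀ r)) atTop

/-- The weak measure density (WMD) condition for `Ω`. -/
def WMD (ρ : X → X → ℝ) (μ : Measure X) (Ω : Set X) : Prop :=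
  ∃ (x₀ : X) (C₀ : ℝ), 0 < C₀ ∧ C₀ ≤ 1 ∧
    ENNReal.ofReal C₀ ≤
      liminf (fun r : ℝ => μ (ball ρ x₀ r ∩ Ω) / μ (ball ρ x₀ r)) atTop

section Aux

variable {ρ : X → X → ℝ} {μ : Measure X} {K₀ : ℝ} {L : ℝ≥0∞}

omit [MeasurableSpace X] in
lemma ball_mono (x : X) {r t : ℝ} (h : r ≤ t) : ball ρ x r ⊆ ball ρ x t :=
  fun _ hy => lt_of_lt_of_le hy h

lemma ball_subset_ball (hX : IsQuasiMetricMeasure ρ μ K₀) {x z : X} {r t : ℝ}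
    (h : K₀ * (ρ x z + t) ≤ r) : ball ρ z t ⊆ ball ρ x r := by
  intro y hy
  have hy' : ρ z y < t := hy
  have hK : (0:ℝ) < K₀ := lt_of_lt_of_le one_pos hX.one_le
  have h1 := hX.triangle x z y
  have h2 : K₀ * (ρ x z + ρ z y) < K₀ * (ρ x z + t) := by
    apply mul_lt_mul_of_pos_left _ hK; linarith
  show ρ x y < r
  linarith

lemma doubling_le (hL : IsDoubling ρ μ L) (x : X)
    {r t : ℝ} (hr : 0 < r) (k : ℕ) (ht : t ≤ 2 ^ k * r) :
    μ (ball ρ x t) ≤ L ^ k * μ (ball ρ x r) := by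
  refine le_trans (measure_mono (ball_mono x ht)) ?_
  clear ht
  induction k with
  | zero => simp
  | succ n ih =>
      have h2 : (0:ℝ) < 2 ^ n * r := by positivity
      have hd := (hL.2.2 x (2 ^ n * r) h2).2.1
      have he : (2:ℝ) ^ (n + 1) * r = 2 * (2 ^ n * r) := by ring
      calc μ (ball ρ x (2 ^ (n + 1) * r)) = μ (ball ρ x (2 * (2 ^ n * r))) := by rw [he]
        _ ≤ L * μ (ball ρ x (2 ^ n * r)) := hd
        _ ≤ L * (L ^ n * μ (ball ρ x r)) := mul_le_mul_right ih L
        _ = L ^ (n + 1) * μ (ball ρ x r) := by ring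

end Aux

set_option maxHeartbeats 1000000 in
theorem statement5 [Nonempty X] (ρ : X → X → ℝ) (μ : Measure X) (K₀ : ℝ) (L : ℝ≥0∞)
    (hX : IsQuasiMetricMeasure ρ μ K₀) (hL : IsDoubling ρ μ L) (hWRD : WRD ρ μ)
    (Ω : Set X) (hΩ : MeasurableSet Ω) (hWMD : WMD ρ μ Ω)
    (q : ℝ) (hq : 0 < q) :
    ∃ C : ℝ≥0∞, 0 < C ∧ ∀ x ∈ Ω,
      C ≤ liminf (fun s : ℝ => ENNReal.ofReal s *
          ∫⁻ y in Ω \ ball ρ x (s ^ (-(1 / q))),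
            1 / (U ρ μ x y * ENNReal.ofReal (ρ x y) ^ (s * q)) ∂μ) (𝓝[>] (0:ℝ)) := by
  obtain ⟨hL1, hLtop, hLd⟩ := hL
  have hK0 : (0:ℝ) < K₀ := lt_of_lt_of_le one_pos hX.one_le
  have hK1 : (1:ℝ) ≤ K₀ := hX.one_le
  -- WRD: eventual reverse doubling at x₀
  obtain ⟨x₀, lam, CW, hlam, hCW, hlimW⟩ := hWRD
  have hlampos : (0:ℝ) < lam := lt_trans one_pos hlam
  set C₁ : ℝ := (1 + CW) / 2 with hC₁def
  have hC₁gt1 : 1 < C₁ := by rw [hC₁def]; linarith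
  have hC₁lt : C₁ < CW := by rw [hC₁def]; linarith
  have hevW : ∀ᶠ r in (atTop : Filter ℝ),
      ENNReal.ofReal C₁ < μ (ball ρ x₀ (lam * r)) / μ (ball ρ x₀ r) :=
    eventually_lt_of_lt_liminf
      (lt_of_lt_of_le ((ENNReal.ofReal_lt_ofReal_iff (by linarith)).2 hC₁lt) hlimW)
  obtain ⟨r₀', hr₀'⟩ := eventually_atTop.mp hevW
  set r₀ : ℝ := max r₀' 1 with hr₀def
  have hr₀1 : (1:ℝ) ≤ r₀ := le_max_right _ _
  have hRD : ∀ r : ℝ, r₀ ≤ r →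
      ENNReal.ofReal C₁ * μ (ball ρ x₀ r) ≤ μ (ball ρ x₀ (lam * r)) := by
    intro r hr
    have hrpos : (0:ℝ) < r := lt_of_lt_of_le one_pos (hr₀1.trans hr)
    have hb := hLd x₀ r hrpos
    have h := (hr₀' r (le_trans (le_max_left _ _) hr)).le
    exact (ENNReal.le_div_iff_mul_le (Or.inl hb.1.ne') (Or.inl hb.2.2.ne)).1 h
  have hRDiter : ∀ (k : ℕ) (r : ℝ), r₀ ≤ r →
      (ENNReal.ofReal C₁) ^ k * μ (ball ρ x₀ r) ≤ μ (ball ρ x₀ (lam ^ k * r)) := by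
    intro k
    induction k with
    | zero => intro r _; simp
    | succ n ih =>
        intro r hr
        have hrpos : (0:ℝ) < r := lt_of_lt_of_le one_pos (hr₀1.trans hr)
        have h1 := ih r hr
        have hlamn : (1:ℝ) ≤ lam ^ n := one_le_pow₀ hlam.le
        have hrn : r₀ ≤ lam ^ n * r := le_trans hr (le_mul_of_one_le_left hrpos.le hlamn)
        have h2 := hRD _ hrn
        have he : lam * (lam ^ n * r) = lam ^ (n + 1) * r := by ring
        calc (ENNReal.ofReal C₁) ^ (n + 1) * μ (ball ρ x₀ r)
            = ENNReal.ofReal C₁ * ((ENNReal.ofReal C₁) ^ n * μ (ball ρ x₀ r)) := by ring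
          _ ≤ ENNReal.ofReal C₁ * μ (ball ρ x₀ (lam ^ n * r)) := mul_le_mul_right h1 _
          _ ≤ μ (ball ρ x₀ (lam * (lam ^ n * r))) := h2
          _ = μ (ball ρ x₀ (lam ^ (n + 1) * r)) := by rw [he]
  -- WMD: eventual measure density at xΩ
  obtain ⟨xΩ, C₀, hC₀pos, hC₀le, hlimM⟩ := hWMD
  set c₀ : ℝ := C₀ / 2 with hc₀def
  have hc₀pos : 0 < c₀ := by positivity
  have hevM : ∀ᶠ r in (atTop : Filter ℝ),
      ENNReal.ofReal c₀ < μ (ball ρ xΩ r ∩ Ω) / μ (ball ρ xΩ r) :=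
    eventually_lt_of_lt_liminf
      (lt_of_lt_of_le ((ENNReal.ofReal_lt_ofReal_iff hC₀pos).2 (by rw [hc₀def]; linarith)) hlimM)
  obtain ⟨r₁', hr₁'⟩ := eventually_atTop.mp hevM
  set r₁ : ℝ := max r₁' 1 with hr₁def
  have hr₁1 : (1:ℝ) ≤ r₁ := le_max_right _ _
  have hWM : ∀ r : ℝ, r₁ ≤ r →
      ENNReal.ofReal c₀ * μ (ball ρ xΩ r) ≤ μ (ball ρ xΩ r ∩ Ω) := by
    intro r hr
    have hrpos : (0:ℝ) < r := lt_of_lt_of_le one_pos (hr₁1.trans hr)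
    have hb := hLd xΩ r hrpos
    have h := (hr₁' r (le_trans (le_max_left _ _) hr)).le
    exact (ENNReal.le_div_iff_mul_le (Or.inl hb.1.ne') (Or.inl hb.2.2.ne)).1 h
  -- constants
  obtain ⟨m, hm⟩ := pow_unbounded_of_one_lt (4 * K₀ ^ 2) (one_lt_two : (1:ℝ) < 2)
  obtain ⟨p, hp⟩ := pow_unbounded_of_one_lt (4 * K₀ ^ 2) hlam
  set LR : ℝ := L.toReal with hLRdef
  have hLR1 : (1:ℝ) ≤ LR := by
    have := ENNReal.toReal_mono hLtop.ne hL1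
    simpa using this
  have hLReq : ENNReal.ofReal LR = L := ENNReal.ofReal_toReal hLtop.ne
  set c₁ : ℝ := c₀ / LR ^ m with hc₁def
  have hc₁pos : 0 < c₁ := by positivity
  set γ : ℝ := c₁ / 2 with hγdef
  have hγpos : 0 < γ := by positivity
  obtain ⟨M, hM⟩ := pow_unbounded_of_one_lt (1 / γ) hC₁gt1
  have hγC : 1 ≤ γ * C₁ ^ M := by
    rw [div_lt_iff₀ hγpos] at hM
    linarith
  set N : ℕ := p + M with hNdef
  set Λ : ℝ := lam ^ N with hΛdef
  have hΛ1 : (1:ℝ) ≤ Λ := one_le_pow₀ hlam.le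
  have hΛpos : (0:ℝ) < Λ := lt_of_lt_of_le one_pos hΛ1
  -- the constant
  set Cr : ℝ := γ * Λ ^ (-(2 * q)) / 2 with hCrdef
  have hCrpos : 0 < Cr := by
    have := Real.rpow_pos_of_pos hΛpos (-(2 * q))
    positivity
  refine ⟨ENNReal.ofReal Cr, ENNReal.ofReal_pos.2 hCrpos, ?_⟩
  intro x hx
  -- per-x threshold
  set Tx : ℝ := max (max (2 * K₀ * ρ x x₀) (2 * K₀ * ρ x xΩ)) (max (max r₀ (2 * K₀ * r₁)) 1)
    with hTxdef
  have hTx1 : (1:ℝ) ≤ Tx := le_trans (le_max_right _ _) (le_max_right _ _)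
  have hTxpos : (0:ℝ) < Tx := lt_of_lt_of_le one_pos hTx1
  -- Lemma A : measure density at x
  have LemA : ∀ r : ℝ, Tx ≤ r →
      ENNReal.ofReal γ * μ (ball ρ x r) + ENNReal.ofReal γ * μ (ball ρ x r)
        ≤ μ (ball ρ x r ∩ Ω) := by
    intro r hr
    have hrpos : (0:ℝ) < r := lt_of_lt_of_le hTxpos hr
    have hρΩ : 2 * K₀ * ρ x xΩ ≤ r :=
      le_trans (le_trans (le_max_right _ _) (le_max_left _ _)) hr
    have hr₁r : 2 * K₀ * r₁ ≤ r :=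
      le_trans (le_trans (le_trans (le_max_right _ _) (le_max_left _ _)) (le_max_right _ _)) hr
    set s₁ : ℝ := r / (2 * K₀) with hs₁def
    have hs₁pos : 0 < s₁ := by positivity
    have hρnn := hX.nonneg x xΩ
    have incl1 : ball ρ xΩ s₁ ⊆ ball ρ x r := by
      apply ball_subset_ball hX
      have h2 : K₀ * s₁ = r / 2 := by rw [hs₁def]; field_simp
      have h3 : K₀ * (ρ x xΩ + s₁) = K₀ * ρ x xΩ + K₀ * s₁ := by ring
      linarith
    have incl2 : ball ρ x r ⊆ ball ρ xΩ (2 * K₀ * r) := by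
      apply ball_subset_ball hX
      have hsymm : ρ xΩ x = ρ x xΩ := hX.symm xΩ x
      rw [hsymm]
      have h4 : r ≤ K₀ * r := le_mul_of_one_le_left hrpos.le hK1
      have h5 : K₀ * (ρ x xΩ + r) = K₀ * ρ x xΩ + K₀ * r := by ring
      linarith
    have hd : μ (ball ρ xΩ (2 * K₀ * r)) ≤ L ^ m * μ (ball ρ xΩ s₁) := by
      apply doubling_le ⟨hL1, hLtop, hLd⟩ xΩ hs₁pos m
      have h6 : 4 * K₀ ^ 2 * s₁ = 2 * K₀ * r := by rw [hs₁def]; field_simp; ring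
      have h7 := mul_le_mul_of_nonneg_right hm.le hs₁pos.le
      linarith
    have hwm : ENNReal.ofReal c₀ * μ (ball ρ xΩ s₁) ≤ μ (ball ρ xΩ s₁ ∩ Ω) := by
      apply hWM
      rw [hs₁def, le_div_iff₀ (by positivity)]
      linarith
    have hkey : ENNReal.ofReal c₁ * L ^ m = ENNReal.ofReal c₀ := by
      rw [← hLReq, ← ENNReal.ofReal_pow (by positivity), ← ENNReal.ofReal_mul hc₁pos.le]
      congr 1
      rw [hc₁def]
      field_simp
    have hchain : ENNReal.ofReal c₁ * μ (ball ρ x r) ≤ μ (ball ρ x r ∩ Ω) :=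
      calc ENNReal.ofReal c₁ * μ (ball ρ x r)
          ≤ ENNReal.ofReal c₁ * μ (ball ρ xΩ (2 * K₀ * r)) :=
            mul_le_mul_right (measure_mono incl2) _
        _ ≤ ENNReal.ofReal c₁ * (L ^ m * μ (ball ρ xΩ s₁)) := mul_le_mul_right hd _
        _ = (ENNReal.ofReal c₁ * L ^ m) * μ (ball ρ xΩ s₁) := by ring
        _ = ENNReal.ofReal c₀ * μ (ball ρ xΩ s₁) := by rw [hkey]
        _ ≤ μ (ball ρ xΩ s₁ ∩ Ω) := hwm
        _ ≤ μ (ball ρ x r ∩ Ω) := measure_mono (inter_subset_inter_left Ω incl1)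
    calc ENNReal.ofReal γ * μ (ball ρ x r) + ENNReal.ofReal γ * μ (ball ρ x r)
        = (ENNReal.ofReal γ + ENNReal.ofReal γ) * μ (ball ρ x r) := by ring
      _ = ENNReal.ofReal c₁ * μ (ball ρ x r) := by
          rw [← ENNReal.ofReal_add hγpos.le hγpos.le]
          congr 2
          rw [hγdef]; ring
      _ ≤ μ (ball ρ x r ∩ Ω) := hchain
  -- Lemma B : reverse doubling at x
  have LemB : ∀ r : ℝ, Tx ≤ r →
      μ (ball ρ x r) ≤ ENNReal.ofReal γ * μ (ball ρ x (Λ * r)) := by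
    intro r hr
    have hrpos : (0:ℝ) < r := lt_of_lt_of_le hTxpos hr
    have hρ₀ : 2 * K₀ * ρ x x₀ ≤ r :=
      le_trans (le_trans (le_max_left _ _) (le_max_left _ _)) hr
    have hr₀r : r₀ ≤ r :=
      le_trans (le_trans (le_trans (le_max_left _ _) (le_max_left _ _)) (le_max_right _ _)) hr
    have hρnn := hX.nonneg x x₀
    have incl1 : ball ρ x r ⊆ ball ρ x₀ (2 * K₀ * r) := by
      apply ball_subset_ball hX
      have hsymm : ρ x₀ x = ρ x x₀ := hX.symm x₀ x
      rw [hsymm]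
      have h4 : r ≤ K₀ * r := le_mul_of_one_le_left hrpos.le hK1
      have h5 : K₀ * (ρ x x₀ + r) = K₀ * ρ x x₀ + K₀ * r := by ring
      linarith
    have hr₀2K : r₀ ≤ 2 * K₀ * r := by
      have h4 : r ≤ K₀ * r := le_mul_of_one_le_left hrpos.le hK1
      linarith
    have iter := hRDiter M (2 * K₀ * r) hr₀2K
    have hlamM : (0:ℝ) < lam ^ M := pow_pos hlampos M
    have hlamp : 4 * K₀ ^ 2 ≤ lam ^ p := hp.le
    have incl2 : ball ρ x₀ (lam ^ M * (2 * K₀ * r)) ⊆ ball ρ x (Λ * r) := by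
      apply ball_subset_ball hX
      have he : Λ = lam ^ p * lam ^ M := by rw [hΛdef, hNdef, pow_add]
      have e1 : K₀ * ρ x x₀ ≤ r / 2 := by linarith
      have e2' := mul_le_mul_of_nonneg_right hlamp (le_of_lt (mul_pos hlamM hrpos))
      have e2 : K₀ * (lam ^ M * (2 * K₀ * r)) ≤ lam ^ p * lam ^ M * r / 2 := by linarith
      have hp1 : (1:ℝ) ≤ lam ^ p := one_le_pow₀ hlam.le
      have hM1 : (1:ℝ) ≤ lam ^ M := one_le_pow₀ hlam.le
      have e3 : (1:ℝ) ≤ lam ^ p * lam ^ M := by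
        calc (1:ℝ) = 1 * 1 := by ring
          _ ≤ lam ^ p * lam ^ M := mul_le_mul hp1 hM1 zero_le_one (by linarith)
      rw [he]
      have e4 : r ≤ lam ^ p * lam ^ M * r := le_mul_of_one_le_left hrpos.le e3
      have e5 : K₀ * (ρ x x₀ + lam ^ M * (2 * K₀ * r))
          = K₀ * ρ x x₀ + K₀ * (lam ^ M * (2 * K₀ * r)) := by ring
      linarith
    have hfull : (ENNReal.ofReal C₁) ^ M * μ (ball ρ x r) ≤ μ (ball ρ x (Λ * r)) :=
      calc (ENNReal.ofReal C₁) ^ M * μ (ball ρ x r)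
          ≤ (ENNReal.ofReal C₁) ^ M * μ (ball ρ x₀ (2 * K₀ * r)) :=
            mul_le_mul_right (measure_mono incl1) _
        _ ≤ μ (ball ρ x₀ (lam ^ M * (2 * K₀ * r))) := iter
        _ ≤ μ (ball ρ x (Λ * r)) := measure_mono incl2
    have hone : (1:ℝ≥0∞) ≤ ENNReal.ofReal γ * (ENNReal.ofReal C₁) ^ M := by
      rw [← ENNReal.ofReal_pow (by linarith), ← ENNReal.ofReal_mul hγpos.le]
      exact ENNReal.one_le_ofReal.2 hγC
    calc μ (ball ρ x r) = 1 * μ (ball ρ x r) := (one_mul _).symm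
      _ ≤ (ENNReal.ofReal γ * (ENNReal.ofReal C₁) ^ M) * μ (ball ρ x r) :=
          mul_le_mul_left hone _
      _ = ENNReal.ofReal γ * ((ENNReal.ofReal C₁) ^ M * μ (ball ρ x r)) := by ring
      _ ≤ ENNReal.ofReal γ * μ (ball ρ x (Λ * r)) := mul_le_mul_right hfull _
  -- eventual bound in s
  have h2ev : ∀ᶠ s in 𝓝[>] (0:ℝ), 1 / 2 ≤ s ^ s := by
    have hlog : Tendsto (fun s : ℝ => Real.log s * s) (𝓝[>] 0) (𝓝 0) := by
      have h := tendsto_log_mul_rpow_nhdsGT_zero (zero_lt_one)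
      simpa using h
    have hexp : Tendsto (fun s : ℝ => Real.exp (Real.log s * s)) (𝓝[>] 0) (𝓝 1) := by
      have := (Real.continuous_exp.continuousAt (x := (0:ℝ))).tendsto.comp hlog
      rw [Real.exp_zero] at this
      exact this
    have hss : Tendsto (fun s : ℝ => s ^ s) (𝓝[>] (0:ℝ)) (𝓝 1) := by
      refine hexp.congr' ?_
      filter_upwards [self_mem_nhdsWithin] with s hs
      rw [Real.rpow_def_of_pos hs]
    exact hss.eventually (eventually_ge_nhds (by norm_num : (1:ℝ) / 2 < 1))
  have h1ev : ∀ᶠ s in 𝓝[>] (0:ℝ), s ∈ Ioc 0 (min 1 (Tx ^ (-q))) := by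
    apply Ioc_mem_nhdsGT
    have := Real.rpow_pos_of_pos hTxpos (-q)
    positivity
  have hev : ∀ᶠ s in 𝓝[>] (0:ℝ),
      ENNReal.ofReal Cr ≤ ENNReal.ofReal s *
        ∫⁻ y in Ω \ ball ρ x (s ^ (-(1 / q))),
          1 / (U ρ μ x y * ENNReal.ofReal (ρ x y) ^ (s * q)) ∂μ := by
    filter_upwards [h1ev, h2ev] with s hs hss
    obtain ⟨hs0, hs1'⟩ := hs
    have hs1 : s ≤ 1 := hs1'.trans (min_le_left _ _)
    have hsT : s ≤ Tx ^ (-q) := hs1'.trans (min_le_right _ _)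
    set R : ℝ := s ^ (-(1 / q)) with hRdef
    -- R ≥ Tx
    have hRT : Tx ≤ R := by
      have h1 : s ^ (1 / q) ≤ (Tx ^ (-q)) ^ (1 / q) :=
        Real.rpow_le_rpow hs0.le hsT (by positivity)
      have h2 : (Tx ^ (-q)) ^ (1 / q) = Tx⁻¹ := by
        rw [← Real.rpow_mul hTxpos.le]
        rw [show -q * (1 / q) = -1 by field_simp]
        exact Real.rpow_neg_one Tx
      have h3 : R = (s ^ (1 / q))⁻¹ := by rw [hRdef, Real.rpow_neg hs0.le]
      have hspos : 0 < s ^ (1 / q) := Real.rpow_pos_of_pos hs0 _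
      rw [h3]
      calc Tx = (Tx⁻¹)⁻¹ := (inv_inv Tx).symm
        _ ≤ (s ^ (1 / q))⁻¹ := by
            apply inv_anti₀ hspos
            exact h1.trans h2.le
    have hR1 : (1:ℝ) ≤ R := hTx1.trans hRT
    have hRpos : (0:ℝ) < R := lt_of_lt_of_le one_pos hR1
    -- the index count
    set n : ℕ := ⌈1 / s⌉₊ with hndef
    have hn1 : (1:ℝ) ≤ n * s := by
      have hc := Nat.le_ceil (1 / s)
      exact (div_le_iff₀ hs0).1 hc
    have hn2 : (n:ℝ) * s ≤ 2 := by
      have h := Nat.ceil_lt_add_one (by positivity : (0:ℝ) ≤ 1 / s)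
      have h' : (n:ℝ) < 1 / s + 1 := h
      have hlt : (n:ℝ) * s < (1 / s + 1) * s := mul_lt_mul_of_pos_right h' hs0
      have he : (1 / s + 1) * s = 1 + s := by field_simp
      linarith
    -- balls and annuli
    set Bf : ℕ → Set X := fun j => ball ρ x (Λ ^ j * R) with hBfdef
    set Af : ℕ → Set X := fun j => (Bf (j + 1) \ Bf j) ∩ Ω with hAfdef
    have hradge : ∀ j : ℕ, R ≤ Λ ^ j * R := fun j =>
      le_mul_of_one_le_left hRpos.le (one_le_pow₀ hΛ1)
    have hrad : ∀ j : ℕ, Tx ≤ Λ ^ j * R := fun j => hRT.trans (hradge j)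
    have hradpos : ∀ j : ℕ, (0:ℝ) < Λ ^ j * R := fun j => by positivity
    have hB0 : ∀ j : ℕ, μ (Bf j) ≠ 0 := fun j => (hLd x _ (hradpos j)).1.ne'
    have hBtop : ∀ j : ℕ, μ (Bf j) ≠ ∞ := fun j => (hLd x _ (hradpos j)).2.2.ne
    have hBmono : ∀ i j : ℕ, i ≤ j → Bf i ⊆ Bf j := by
      intro i j hij
      apply ball_mono
      exact mul_le_mul_of_nonneg_right (pow_le_pow_right₀ hΛ1 hij) hRpos.le
    have hAmeas : ∀ j : ℕ, MeasurableSet (Af j) := fun j =>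
      ((hX.measurableSet_ball _ _).diff (hX.measurableSet_ball _ _)).inter hΩ
    have hAsub : ∀ j : ℕ, Af j ⊆ Ω \ ball ρ x R := by
      intro j y hy
      refine ⟨hy.2, fun hyR => ?_⟩
      exact hy.1.2 (ball_mono x (hradge j) hyR)
    have hdisjlt : ∀ i j : ℕ, i < j → Disjoint (Af i) (Af j) := by
      intro i j hij
      rw [Set.disjoint_left]
      intro y hyi hyj
      exact hyj.1.2 (hBmono (i + 1) j hij (hyi.1.1))
    have hdisj : Set.PairwiseDisjoint (↑(Finset.range n)) Af := by
      intro i _ j _ hij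
      rcases lt_or_gt_of_ne hij with h | h
      · exact hdisjlt i j h
      · exact (hdisjlt j i h).symm
    -- measure of annuli
    have hμA : ∀ j : ℕ, ENNReal.ofReal γ * μ (Bf (j + 1)) ≤ μ (Af j) := by
      intro j
      have hA := LemA (Λ ^ (j + 1) * R) (hrad (j + 1))
      have hBle : μ (Bf j) ≤ ENNReal.ofReal γ * μ (Bf (j + 1)) := by
        have hB := LemB (Λ ^ j * R) (hrad j)
        have he : Λ * (Λ ^ j * R) = Λ ^ (j + 1) * R := by ring
        rw [he] at hB
        exact hB
      have hcover : Bf (j + 1) ∩ Ω ⊆ Af j ∪ (Bf j ∩ Ω) := by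
        intro y hy
        obtain ⟨h1, h2⟩ := hy
        by_cases h : y ∈ Bf j
        · exact Or.inr ⟨h, h2⟩
        · exact Or.inl ⟨⟨h1, h⟩, h2⟩
      have hchain : ENNReal.ofReal γ * μ (Bf (j + 1)) + ENNReal.ofReal γ * μ (Bf (j + 1))
          ≤ μ (Af j) + ENNReal.ofReal γ * μ (Bf (j + 1)) :=
        calc ENNReal.ofReal γ * μ (Bf (j + 1)) + ENNReal.ofReal γ * μ (Bf (j + 1))
            ≤ μ (Bf (j + 1) ∩ Ω) := hA
          _ ≤ μ (Af j ∪ (Bf j ∩ Ω)) := measure_mono hcover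
          _ ≤ μ (Af j) + μ (Bf j ∩ Ω) := measure_union_le _ _
          _ ≤ μ (Af j) + μ (Bf j) := add_le_add_right (measure_mono inter_subset_left) _
          _ ≤ μ (Af j) + ENNReal.ofReal γ * μ (Bf (j + 1)) := add_le_add_right hBle _
      exact (ENNReal.add_le_add_iff_right
        (ENNReal.mul_ne_top ENNReal.ofReal_ne_top (hBtop (j + 1)))).1 hchain
    -- pointwise bound on annuli
    have hfA : ∀ j : ℕ, ∀ y ∈ Af j,
        (μ (Bf (j + 1)) * ENNReal.ofReal ((Λ ^ (j + 1) * R) ^ (s * q)))⁻¹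
          ≤ 1 / (U ρ μ x y * ENNReal.ofReal (ρ x y) ^ (s * q)) := by
      intro j y hy
      have hρy : ρ x y < Λ ^ (j + 1) * R := hy.1.1
      have hU : U ρ μ x y ≤ μ (Bf (j + 1)) :=
        (min_le_left _ _).trans (measure_mono (ball_mono x hρy.le))
      have ht : ENNReal.ofReal (ρ x y) ^ (s * q)
          ≤ ENNReal.ofReal ((Λ ^ (j + 1) * R) ^ (s * q)) := by
        rw [← ENNReal.ofReal_rpow_of_pos (hradpos (j + 1))]
        exact ENNReal.rpow_le_rpow (ENNReal.ofReal_le_ofReal hρy.le) (by positivity)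
      rw [one_div]
      exact ENNReal.inv_le_inv' (mul_le_mul' hU ht)
    -- summation over annuli
    have hsum : ∀ j ∈ Finset.range n,
        ENNReal.ofReal γ * (ENNReal.ofReal ((Λ ^ n * R) ^ (s * q)))⁻¹
          ≤ ∫⁻ y in Af j, 1 / (U ρ μ x y * ENNReal.ofReal (ρ x y) ^ (s * q)) ∂μ := by
      intro j hj
      have hjn : j + 1 ≤ n := Finset.mem_range.1 hj
      have hv1 : ENNReal.ofReal ((Λ ^ (j + 1) * R) ^ (s * q))
          ≤ ENNReal.ofReal ((Λ ^ n * R) ^ (s * q)) := by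
        apply ENNReal.ofReal_le_ofReal
        apply Real.rpow_le_rpow (by positivity) _ (by positivity)
        exact mul_le_mul_of_nonneg_right (pow_le_pow_right₀ hΛ1 hjn) hRpos.le
      calc ENNReal.ofReal γ * (ENNReal.ofReal ((Λ ^ n * R) ^ (s * q)))⁻¹
          ≤ ENNReal.ofReal γ * (ENNReal.ofReal ((Λ ^ (j + 1) * R) ^ (s * q)))⁻¹ :=
            mul_le_mul_right (ENNReal.inv_le_inv' hv1) _
        _ = ((μ (Bf (j + 1)))⁻¹ * μ (Bf (j + 1))) *
              (ENNReal.ofReal γ * (ENNReal.ofReal ((Λ ^ (j + 1) * R) ^ (s * q)))⁻¹) := by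
            rw [ENNReal.inv_mul_cancel (hB0 (j + 1)) (hBtop (j + 1)), one_mul]
        _ = (μ (Bf (j + 1)) * ENNReal.ofReal ((Λ ^ (j + 1) * R) ^ (s * q)))⁻¹ *
              (ENNReal.ofReal γ * μ (Bf (j + 1))) := by
            rw [ENNReal.mul_inv (Or.inl (hB0 (j + 1))) (Or.inl (hBtop (j + 1)))]
            ring
        _ ≤ (μ (Bf (j + 1)) * ENNReal.ofReal ((Λ ^ (j + 1) * R) ^ (s * q)))⁻¹ * μ (Af j) :=
            mul_le_mul_right (hμA j) _
        _ = ∫⁻ _ in Af j,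
              (μ (Bf (j + 1)) * ENNReal.ofReal ((Λ ^ (j + 1) * R) ^ (s * q)))⁻¹ ∂μ := by
            rw [setLIntegral_const]
        _ ≤ ∫⁻ y in Af j, 1 / (U ρ μ x y * ENNReal.ofReal (ρ x y) ^ (s * q)) ∂μ :=
            setLIntegral_mono' (hAmeas j) (hfA j)
    have hInt : (n : ℝ≥0∞) * (ENNReal.ofReal γ *
          (ENNReal.ofReal ((Λ ^ n * R) ^ (s * q)))⁻¹)
        ≤ ∫⁻ y in Ω \ ball ρ x R,
            1 / (U ρ μ x y * ENNReal.ofReal (ρ x y) ^ (s * q)) ∂μ := by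
      calc (n : ℝ≥0∞) * (ENNReal.ofReal γ * (ENNReal.ofReal ((Λ ^ n * R) ^ (s * q)))⁻¹)
          = ∑ _j ∈ Finset.range n,
              ENNReal.ofReal γ * (ENNReal.ofReal ((Λ ^ n * R) ^ (s * q)))⁻¹ := by
            rw [Finset.sum_const, Finset.card_range, nsmul_eq_mul]
        _ ≤ ∑ j ∈ Finset.range n,
              ∫⁻ y in Af j, 1 / (U ρ μ x y * ENNReal.ofReal (ρ x y) ^ (s * q)) ∂μ :=
            Finset.sum_le_sum hsum
        _ = ∫⁻ y in ⋃ j ∈ Finset.range n, Af j,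
              1 / (U ρ μ x y * ENNReal.ofReal (ρ x y) ^ (s * q)) ∂μ :=
            (lintegral_biUnion_finset hdisj (fun j _ => hAmeas j) _).symm
        _ ≤ ∫⁻ y in Ω \ ball ρ x R,
              1 / (U ρ μ x y * ENNReal.ofReal (ρ x y) ^ (s * q)) ∂μ :=
            lintegral_mono_set (iUnion₂_subset fun j _ => hAsub j)
    -- the real-number computation
    have hΛn : (0:ℝ) < Λ ^ n := pow_pos hΛpos n
    have hreal : Cr ≤ s * ((n : ℝ) * (γ * (Λ ^ n * R) ^ (-(s * q)))) := by
      have e1 : ((Λ ^ n * R) : ℝ) ^ (-(s * q)) = (Λ ^ n) ^ (-(s * q)) * R ^ (-(s * q)) :=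
        Real.mul_rpow hΛn.le hRpos.le
      have e2 : (R : ℝ) ^ (-(s * q)) = s ^ s := by
        rw [hRdef, ← Real.rpow_mul hs0.le]
        congr 1
        field_simp
      have e3 : Λ ^ (-(2 * q)) ≤ ((Λ ^ n : ℝ)) ^ (-(s * q)) := by
        rw [← Real.rpow_natCast Λ n, ← Real.rpow_mul hΛpos.le]
        apply Real.rpow_le_rpow_of_exponent_le hΛ1
        have h8 := mul_le_mul_of_nonneg_right hn2 hq.le
        have h9 : (n:ℝ) * (-(s * q)) = -((n:ℝ) * s * q) := by ring
        rw [h9]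
        linarith
      have hnR : 0 < ((Λ ^ n : ℝ)) ^ (-(s * q)) := Real.rpow_pos_of_pos hΛn _
      have hsspos : 0 < s ^ s := Real.rpow_pos_of_pos hs0 _
      have h5 : γ * (Λ ^ (-(2 * q)) * (1 / 2)) ≤ γ * (((Λ ^ n : ℝ)) ^ (-(s * q)) * s ^ s) := by
        apply mul_le_mul_of_nonneg_left _ hγpos.le
        apply mul_le_mul e3 hss (by norm_num) hnR.le
      have h6 : γ * (((Λ ^ n : ℝ)) ^ (-(s * q)) * s ^ s)
          ≤ ((n:ℝ) * s) * (γ * (((Λ ^ n : ℝ)) ^ (-(s * q)) * s ^ s)) :=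
        le_mul_of_one_le_left (by positivity) hn1
      have e7 : s * ((n : ℝ) * (γ * ((Λ ^ n * R) : ℝ) ^ (-(s * q))))
          = ((n:ℝ) * s) * (γ * (((Λ ^ n : ℝ)) ^ (-(s * q)) * s ^ s)) := by
        rw [e1, e2]; ring
      rw [e7]
      calc Cr = γ * (Λ ^ (-(2 * q)) * (1 / 2)) := by rw [hCrdef]; ring
        _ ≤ _ := h5.trans h6
    -- conclusion for this s
    have hΛnR : (0:ℝ) < Λ ^ n * R := by positivity
    calc ENNReal.ofReal Cr
        ≤ ENNReal.ofReal (s * ((n : ℝ) * (γ * (Λ ^ n * R) ^ (-(s * q))))) :=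
          ENNReal.ofReal_le_ofReal hreal
      _ = ENNReal.ofReal s * ((n : ℝ≥0∞) *
            (ENNReal.ofReal γ * ENNReal.ofReal ((Λ ^ n * R) ^ (-(s * q))))) := by
          rw [ENNReal.ofReal_mul hs0.le, ENNReal.ofReal_mul (by positivity : (0:ℝ) ≤ (n:ℝ)),
            ENNReal.ofReal_mul hγpos.le, ENNReal.ofReal_natCast]
      _ = ENNReal.ofReal s * ((n : ℝ≥0∞) *
            (ENNReal.ofReal γ * (ENNReal.ofReal ((Λ ^ n * R) ^ (s * q)))⁻¹)) := by
          rw [Real.rpow_neg hΛnR.le,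
            ENNReal.ofReal_inv_of_pos (Real.rpow_pos_of_pos hΛnR _)]
      _ ≤ ENNReal.ofReal s * ∫⁻ y in Ω \ ball ρ x R,
            1 / (U ρ μ x y * ENNReal.ofReal (ρ x y) ^ (s * q)) ∂μ :=
          mul_le_mul_right hInt _
  have hlim := Filter.liminf_le_liminf hev
  rwa [liminf_const] at hlim

end Paper
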